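/- Let p be a prime and for k ≥ 0 let a_p(k) denote the number of orbits of the right-multiplication action of SL(2, ℤ/pℤ) on k×2 matrices over ℤ/pℤ, and set F(n) = a_p(n+1) − a_p(n). Then F satisfies the recursion F(n) = p·F(n−1) + p^{2n−2}(p − 1) for all n ≥ 1, with initial value F(0) = 1; equivalently, a_p(n+1) − a_p(n) = p·(a_p(n) − a_p(n−1)) + p^{2n−2}(p−1) for n ≥ 1. -/
import Mathlib

open Matrix MulAction Finset

/-- The orbit relation of the right-multiplication action of `SL(2, ℤ/pℤ)`
on `k × 2` matrices over `ℤ/pℤ`. -/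
def slOrbRel (p k : ℕ) :
    Matrix (Fin k) (Fin 2) (ZMod p) → Matrix (Fin k) (Fin 2) (ZMod p) → Prop :=
  fun M N => ∃ A : Matrix.SpecialLinearGroup (Fin 2) (ZMod p),
    M * (A : Matrix (Fin 2) (Fin 2) (ZMod p)) = N

/-- `a_p(k)`: the number of orbits of `SL(2, ℤ/pℤ)` on `k × 2` matrices over `ℤ/pℤ`. -/
noncomputable def slOrbCount (p k : ℕ) : ℕ := Nat.card (Quot (slOrbRel p k))

/-- `F(n) = a_p(n+1) - a_p(n)`. -/
noncomputable def slOrbDiff (p n : ℕ) : ℤ := (slOrbCount p (n + 1) : ℤ) - slOrbCount p n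

section auxiliary

lemma card_subtype_prod {α β : Type*} [Fintype α] [Fintype β] (P : α × β → Prop)
    [∀ x, Decidable (P x)] :
    Fintype.card {x : α × β // P x} = ∑ a : α, Fintype.card {b : β // P (a, b)} := by
  rw [← Fintype.card_sigma]
  exact Fintype.card_congr ⟨fun x => ⟨x.1.1, x.1.2, x.2⟩, fun x => ⟨(x.1, x.2.1), x.2.2⟩,
    fun x => rfl, fun x => rfl⟩

variable (p : ℕ) [Fact p.Prime]

lemma card_mul_fiber (s : ZMod p) :
    Fintype.card {x : ZMod p × ZMod p // x.1 * x.2 = s} =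
      if s = 0 then 2 * p - 1 else p - 1 := by
  have hp : 1 ≤ p := (Fact.out : p.Prime).one_lt.le
  rw [card_subtype_prod]
  have key : ∀ b : ZMod p, Fintype.card {c : ZMod p // b * c = s} =
      if b = 0 then (if s = 0 then p else 0) else 1 := by
    intro b
    by_cases hb : b = 0
    · subst hb
      by_cases hs : s = 0
      · subst hs
        rw [if_pos rfl, if_pos rfl,
          Fintype.card_congr (Equiv.subtypeUnivEquiv (fun c => by simp)), ZMod.card]
      · rw [if_pos rfl, if_neg hs]
        exact Fintype.card_eq_zero_iff.2 ⟨fun x => hs (by simpa using x.2.symm)⟩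
    · rw [if_neg hb]
      have : ∀ c : ZMod p, (b * c = s) ↔ c = b⁻¹ * s := by
        intro c
        rw [eq_inv_mul_iff_mul_eq₀ hb]
      rw [Fintype.card_congr (Equiv.subtypeEquivRight this), Fintype.card_subtype_eq]
  simp_rw [key]
  rw [Finset.sum_eq_sum_sdiff_singleton_add (Finset.mem_univ (0 : ZMod p))]
  rw [if_pos rfl]
  have h1 : ∀ b ∈ Finset.univ \ {(0 : ZMod p)},
      (if b = 0 then (if s = 0 then p else 0) else 1) = 1 := by
    intro b hb
    rw [if_neg (by simpa using (Finset.mem_sdiff.1 hb).2)]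
  rw [Finset.sum_congr rfl h1, Finset.sum_const, smul_eq_mul, mul_one,
    Finset.card_sdiff_of_subset (by simp), Finset.card_univ, ZMod.card, Finset.card_singleton]
  split_ifs <;> omega

/-- tuple `((a,d),(b,c))` ↦ `!![a,b;c,d]` -/
def slEquiv : {x : (ZMod p × ZMod p) × (ZMod p × ZMod p) //
      x.2.1 * x.2.2 = x.1.1 * x.1.2 - 1} ≃ Matrix.SpecialLinearGroup (Fin 2) (ZMod p) where
  toFun x := ⟨!![x.1.1.1, x.1.2.1; x.1.2.2, x.1.1.2], by
    rw [Matrix.det_fin_two_of]; linear_combination -x.2⟩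
  invFun A := ⟨((A.1 0 0, A.1 1 1), (A.1 0 1, A.1 1 0)), by
    have h := A.2; rw [Matrix.det_fin_two] at h; linear_combination -h⟩
  left_inv x := by
    apply Subtype.ext
    simp
  right_inv A := by
    apply Subtype.ext
    exact (Matrix.eta_fin_two A.1).symm

lemma card_SL2 : (Fintype.card (Matrix.SpecialLinearGroup (Fin 2) (ZMod p)) : ℤ) =
    p ^ 3 - p := by
  have hp : 2 ≤ p := (Fact.out : p.Prime).two_le
  have h1 : (1 : ZMod p) ≠ 0 := one_ne_zero
  have e : Fintype.card (Matrix.SpecialLinearGroup (Fin 2) (ZMod p)) =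
      (2 * p - 1) * (p - 1) + (p - 1) * (p ^ 2 - (p - 1)) := by
    rw [← Fintype.card_congr (slEquiv p), card_subtype_prod]
    have step : ∀ a : ZMod p × ZMod p,
        Fintype.card {b : ZMod p × ZMod p // b.1 * b.2 = a.1 * a.2 - 1} =
        if a.1 * a.2 = 1 then 2 * p - 1 else p - 1 := by
      intro a
      rw [card_mul_fiber]; simp only [sub_eq_zero]
    simp_rw [step]
    rw [Finset.sum_ite, Finset.sum_const, Finset.sum_const, smul_eq_mul, smul_eq_mul,
      mul_comm _ (2 * p - 1), mul_comm _ (p - 1)]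
    congr 1
    · congr 1
      rw [← Fintype.card_subtype]
      have := card_mul_fiber p 1
      rw [if_neg h1] at this
      rw [← this]
    · congr 1
      have hsplit := Finset.card_filter_add_card_filter_not
        (s := (Finset.univ : Finset (ZMod p × ZMod p)))
        (p := fun x => x.1 * x.2 = 1)
      have hu : (Finset.univ : Finset (ZMod p × ZMod p)).card = p ^ 2 := by
        rw [Finset.card_univ, Fintype.card_prod, ZMod.card]; ring
      have hc : (Finset.univ.filter (fun x : ZMod p × ZMod p => x.1 * x.2 = 1)).card = p - 1 := by
        rw [← Fintype.card_subtype]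
        have := card_mul_fiber p 1
        rwa [if_neg h1] at this
      omega
  rw [e]
  have h2 : 1 ≤ 2 * p := by omega
  have h3 : 1 ≤ p := by omega
  have h4 : p - 1 ≤ p ^ 2 := le_trans (by omega) (Nat.le_self_pow (by norm_num) p)
  push_cast [Nat.cast_sub h2, Nat.cast_sub h3, Nat.cast_sub h4]
  ring

/-- tuple `(a,(b,c))` ↦ `!![a,b;c,2-a]` -/
def slTraceEquiv : {x : ZMod p × (ZMod p × ZMod p) //
      x.2.1 * x.2.2 = -(x.1 - 1) ^ 2} ≃
    {A : Matrix.SpecialLinearGroup (Fin 2) (ZMod p) //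
      Matrix.trace (A : Matrix (Fin 2) (Fin 2) (ZMod p)) = 2} where
  toFun x := ⟨⟨!![x.1.1, x.1.2.1; x.1.2.2, 2 - x.1.1], by
      rw [Matrix.det_fin_two_of]; linear_combination -x.2⟩, by
      rw [Matrix.trace_fin_two]; show x.1.1 + (2 - x.1.1) = 2; ring⟩
  invFun A := ⟨(A.1.1 0 0, (A.1.1 0 1, A.1.1 1 0)), by
    have hd := A.1.2
    have ht := A.2
    rw [Matrix.det_fin_two] at hd
    rw [Matrix.trace_fin_two] at ht
    linear_combination (A.1.1 0 0) * ht - hd⟩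
  left_inv x := by
    apply Subtype.ext
    simp
  right_inv A := by
    apply Subtype.ext
    apply Subtype.ext
    have ht := A.2
    rw [Matrix.trace_fin_two] at ht
    show !![A.1.1 0 0, A.1.1 0 1; A.1.1 1 0, 2 - A.1.1 0 0] = A.1.1
    have h11 : (2 : ZMod p) - A.1.1 0 0 = A.1.1 1 1 := by linear_combination -ht
    rw [h11]
    exact (Matrix.eta_fin_two A.1.1).symm

lemma card_trace_two : (Fintype.card {A : Matrix.SpecialLinearGroup (Fin 2) (ZMod p) //
    Matrix.trace (A : Matrix (Fin 2) (Fin 2) (ZMod p)) = 2} : ℤ) = p ^ 2 := by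
  have hp : 2 ≤ p := (Fact.out : p.Prime).two_le
  have e : Fintype.card {A : Matrix.SpecialLinearGroup (Fin 2) (ZMod p) //
      Matrix.trace (A : Matrix (Fin 2) (Fin 2) (ZMod p)) = 2} =
      (p - 1) * (p - 1) + (2 * p - 1) := by
    rw [← Fintype.card_congr (slTraceEquiv p), card_subtype_prod]
    have step : ∀ a : ZMod p,
        Fintype.card {b : ZMod p × ZMod p // b.1 * b.2 = -(a - 1) ^ 2} =
        if a = 1 then 2 * p - 1 else p - 1 := by
      intro a
      rw [card_mul_fiber]
      simp only [neg_eq_zero, pow_eq_zero_iff (two_ne_zero), sub_eq_zero]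
    simp_rw [step]
    rw [Finset.sum_eq_sum_sdiff_singleton_add (Finset.mem_univ (1 : ZMod p)), if_pos rfl]
    have h1 : ∀ b ∈ Finset.univ \ {(1 : ZMod p)},
        (if b = 1 then 2 * p - 1 else p - 1) = p - 1 := by
      intro b hb
      rw [if_neg (by simpa using (Finset.mem_sdiff.1 hb).2)]
    rw [Finset.sum_congr rfl h1, Finset.sum_const, smul_eq_mul,
      Finset.card_sdiff_of_subset (by simp), Finset.card_univ, ZMod.card, Finset.card_singleton]
  rw [e]
  have h3 : 1 ≤ p := by omega
  have h2 : 1 ≤ 2 * p := by omega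
  push_cast [Nat.cast_sub h2, Nat.cast_sub h3]
  ring

instance rowAction (k : ℕ) : MulAction (Matrix.SpecialLinearGroup (Fin 2) (ZMod p))ᵐᵒᵖ
    (Matrix (Fin k) (Fin 2) (ZMod p)) where
  smul g M := M * (g.unop : Matrix (Fin 2) (Fin 2) (ZMod p))
  one_smul M := by
    show M * ((1 : Matrix.SpecialLinearGroup (Fin 2) (ZMod p)) :
      Matrix (Fin 2) (Fin 2) (ZMod p)) = M
    simp
  mul_smul g h M := by
    show M * (((g * h).unop : Matrix.SpecialLinearGroup (Fin 2) (ZMod p)) :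
        Matrix (Fin 2) (Fin 2) (ZMod p)) =
      (M * (h.unop : Matrix (Fin 2) (Fin 2) (ZMod p))) *
        (g.unop : Matrix (Fin 2) (Fin 2) (ZMod p))
    rw [MulOpposite.unop_mul, Matrix.SpecialLinearGroup.coe_mul, Matrix.mul_assoc]

lemma smul_def' (k : ℕ) (A : Matrix.SpecialLinearGroup (Fin 2) (ZMod p))
    (M : Matrix (Fin k) (Fin 2) (ZMod p)) :
    (MulOpposite.op A) • M = M * (A : Matrix (Fin 2) (Fin 2) (ZMod p)) := rfl

lemma finrank_ker_vecMul (A : Matrix.SpecialLinearGroup (Fin 2) (ZMod p)) :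
    Module.finrank (ZMod p) (LinearMap.ker
        ((A - 1 : Matrix (Fin 2) (Fin 2) (ZMod p)).vecMulLinear)) =
      if (A : Matrix (Fin 2) (Fin 2) (ZMod p)) = 1 then 2 else
        if Matrix.trace (A : Matrix (Fin 2) (Fin 2) (ZMod p)) = 2 then 1 else 0 := by
  set B : Matrix (Fin 2) (Fin 2) (ZMod p) := (A : Matrix (Fin 2) (Fin 2) (ZMod p)) - 1 with hBdef
  have hdetA : Matrix.det (A : Matrix (Fin 2) (Fin 2) (ZMod p)) = 1 := A.2
  have hB : B.det = 2 - Matrix.trace (A : Matrix (Fin 2) (Fin 2) (ZMod p)) := by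
    rw [Matrix.det_fin_two] at hdetA ⊢
    rw [Matrix.trace_fin_two]
    simp only [hBdef, Matrix.sub_apply, Matrix.one_apply]
    norm_num
    linear_combination hdetA
  have hdim : Module.finrank (ZMod p) (Fin 2 → ZMod p) = 2 := by
    simp [Module.finrank_fintype_fun_eq_card]
  by_cases h1 : (A : Matrix (Fin 2) (Fin 2) (ZMod p)) = 1
  · rw [if_pos h1]
    have hB0 : B = 0 := by rw [hBdef, h1, sub_self]
    have : B.vecMulLinear = 0 := by
      apply LinearMap.ext
      intro v
      simp [hB0]
    rw [this, LinearMap.ker_zero, finrank_top, hdim]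
  · rw [if_neg h1]
    by_cases h2 : Matrix.trace (A : Matrix (Fin 2) (Fin 2) (ZMod p)) = 2
    · rw [if_pos h2]
      have hdet0 : B.det = 0 := by rw [hB, h2, sub_self]
      have hne : LinearMap.ker B.vecMulLinear ≠ ⊥ := by
        obtain ⟨v, hv0, hv⟩ := Matrix.exists_vecMul_eq_zero_iff.2 hdet0
        rw [Submodule.ne_bot_iff]
        exact ⟨v, by simpa using hv, hv0⟩
      have hnetop : LinearMap.ker B.vecMulLinear ≠ ⊤ := by
        intro htop
        apply h1
        have hB0 : B = 0 := by
          ext i j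
          have hmem : (Pi.single i 1 : Fin 2 → ZMod p) ∈ LinearMap.ker B.vecMulLinear := by
            rw [htop]; trivial
          rw [LinearMap.mem_ker, Matrix.vecMulLinear_apply, Matrix.single_one_vecMul] at hmem
          simpa using congrFun hmem j
        rw [hBdef, sub_eq_zero] at hB0
        exact hB0
      have hle : Module.finrank (ZMod p) (LinearMap.ker B.vecMulLinear) ≤ 2 :=
        le_trans (Submodule.finrank_le _) (le_of_eq hdim)
      have hne2 : Module.finrank (ZMod p) (LinearMap.ker B.vecMulLinear) ≠ 2 := by
        intro h
        exact hnetop (Submodule.eq_top_of_finrank_eq (by rw [h, hdim]))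
      have hne0 : Module.finrank (ZMod p) (LinearMap.ker B.vecMulLinear) ≠ 0 := by
        rw [ne_eq, Submodule.finrank_eq_zero]
        exact hne
      omega
    · rw [if_neg h2]
      have hdet0 : B.det ≠ 0 := by
        rw [hB, sub_ne_zero]
        exact fun h => h2 h.symm
      have : LinearMap.ker B.vecMulLinear = ⊥ := by
        rw [Submodule.eq_bot_iff]
        intro v hv
        by_contra hv0
        exact hdet0 (Matrix.exists_vecMul_eq_zero_iff.1 ⟨v, hv0, by simpa using hv⟩)
      rw [this, finrank_bot]

lemma card_fixedBy' (k : ℕ) (A : Matrix.SpecialLinearGroup (Fin 2) (ZMod p)) :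
    Fintype.card (MulAction.fixedBy (Matrix (Fin k) (Fin 2) (ZMod p)) (MulOpposite.op A)) =
      (p ^ (if (A : Matrix (Fin 2) (Fin 2) (ZMod p)) = 1 then 2 else
        if Matrix.trace (A : Matrix (Fin 2) (Fin 2) (ZMod p)) = 2 then 1 else 0)) ^ k := by
  set B : Matrix (Fin 2) (Fin 2) (ZMod p) := (A : Matrix (Fin 2) (Fin 2) (ZMod p)) - 1 with hBdef
  have hrow : ∀ M : Matrix (Fin k) (Fin 2) (ZMod p),
      M * (A : Matrix (Fin 2) (Fin 2) (ZMod p)) = M ↔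
        ∀ i, M i ∈ LinearMap.ker B.vecMulLinear := by
    intro M
    rw [← Matrix.ext_iff]
    refine forall_congr' fun i => ?_
    rw [LinearMap.mem_ker, Matrix.vecMulLinear_apply, funext_iff]
    refine forall_congr' fun j => ?_
    rw [hBdef, Matrix.vecMul_sub, Matrix.vecMul_one, Pi.sub_apply, Pi.zero_apply, sub_eq_zero,
      ← Matrix.mul_apply_eq_vecMul]
  have e : (MulAction.fixedBy (Matrix (Fin k) (Fin 2) (ZMod p)) (MulOpposite.op A)) ≃
      (Fin k → LinearMap.ker B.vecMulLinear) :=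
    { toFun := fun M i => ⟨M.1 i, (hrow M.1).1 M.2 i⟩
      invFun := fun f => ⟨fun i => (f i : Fin 2 → ZMod p),
        (hrow _).2 fun i => (f i).2⟩
      left_inv := fun M => rfl
      right_inv := fun f => rfl }
  letI : Fintype (LinearMap.ker ((B : Matrix (Fin 2) (Fin 2) (ZMod p)).vecMulLinear)) :=
    Fintype.ofFinite _
  rw [Fintype.card_congr e, Fintype.card_fun, Fintype.card_fin,
    Module.card_eq_pow_finrank (K := ZMod p), ZMod.card, finrank_ker_vecMul]

lemma slOrbRel_symm (k : ℕ) {M N : Matrix (Fin k) (Fin 2) (ZMod p)}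
    (h : slOrbRel p k M N) : slOrbRel p k N M := by
  obtain ⟨A, hA⟩ := h
  refine ⟨A⁻¹, ?_⟩
  rw [← hA, Matrix.mul_assoc, ← Matrix.SpecialLinearGroup.coe_mul, mul_inv_cancel,
    Matrix.SpecialLinearGroup.coe_one, Matrix.mul_one]

lemma key_count (k : ℕ) : (slOrbCount p k : ℤ) * ((p : ℤ) ^ 3 - p) =
    (p : ℤ) ^ (2 * k) - (p : ℤ) ^ k + ((p : ℤ) ^ k - 1) * (p : ℤ) ^ 2 +
      ((p : ℤ) ^ 3 - (p : ℤ)) := by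
  classical
  letI : Fintype (Matrix.SpecialLinearGroup (Fin 2) (ZMod p))ᵐᵒᵖ :=
    Fintype.ofEquiv _ MulOpposite.opEquiv
  letI : Fintype (Quotient (orbitRel (Matrix.SpecialLinearGroup (Fin 2) (ZMod p))ᵐᵒᵖ (Matrix (Fin k) (Fin 2) (ZMod p)))) := Fintype.ofFinite _
  -- identify the two quotients
  have hquot : slOrbCount p k = Fintype.card (Quotient (orbitRel (Matrix.SpecialLinearGroup (Fin 2) (ZMod p))ᵐᵒᵖ (Matrix (Fin k) (Fin 2) (ZMod p)))) := by
    rw [slOrbCount, ← Nat.card_eq_fintype_card]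
    apply Nat.card_congr
    refine Quot.congr (Equiv.refl (Matrix (Fin k) (Fin 2) (ZMod p))) ?_
    intro a b
    constructor
    · intro h
      obtain ⟨A, hA⟩ := slOrbRel_symm p k h
      exact ⟨MulOpposite.op A, hA⟩
    · intro h
      obtain ⟨g, hg⟩ := h
      exact slOrbRel_symm p k ⟨g.unop, hg⟩
  -- Burnside
  have hburn := MulAction.sum_card_fixedBy_eq_card_orbits_mul_card_group (Matrix.SpecialLinearGroup (Fin 2) (ZMod p))ᵐᵒᵖ (Matrix (Fin k) (Fin 2) (ZMod p))
  have hsum : ∑ a : (Matrix.SpecialLinearGroup (Fin 2) (ZMod p))ᵐᵒᵖ, Fintype.card (MulAction.fixedBy (Matrix (Fin k) (Fin 2) (ZMod p)) a) =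
      ∑ A : (Matrix.SpecialLinearGroup (Fin 2) (ZMod p)), Fintype.card (MulAction.fixedBy (Matrix (Fin k) (Fin 2) (ZMod p)) (MulOpposite.op A)) :=
    (Equiv.sum_comp (MulOpposite.opEquiv (α := (Matrix.SpecialLinearGroup (Fin 2) (ZMod p))))
      (fun a => Fintype.card (MulAction.fixedBy (Matrix (Fin k) (Fin 2) (ZMod p)) a))).symm
  have hcardop : Fintype.card (Matrix.SpecialLinearGroup (Fin 2) (ZMod p))ᵐᵒᵖ = Fintype.card (Matrix.SpecialLinearGroup (Fin 2) (ZMod p)) :=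
    Fintype.card_congr (MulOpposite.opEquiv (α := (Matrix.SpecialLinearGroup (Fin 2) (ZMod p)))).symm
  rw [hsum, hcardop] at hburn
  -- cast to ℤ
  have hZ : (Fintype.card (Quotient (orbitRel (Matrix.SpecialLinearGroup (Fin 2) (ZMod p))ᵐᵒᵖ (Matrix (Fin k) (Fin 2) (ZMod p)))) : ℤ) * (Fintype.card (Matrix.SpecialLinearGroup (Fin 2) (ZMod p)) : ℤ) =
      ∑ A : (Matrix.SpecialLinearGroup (Fin 2) (ZMod p)), ((p : ℤ) ^ (if (A : Matrix (Fin 2) (Fin 2) (ZMod p)) = 1 then 2 else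
        if Matrix.trace (A : Matrix (Fin 2) (Fin 2) (ZMod p)) = 2 then 1 else 0)) ^ k := by
    rw [← Nat.cast_mul, ← hburn, Nat.cast_sum]
    refine Finset.sum_congr rfl fun A _ => ?_
    rw [card_fixedBy']
    push_cast
    ring
  -- evaluate the sum
  have hpoint : ∀ A : (Matrix.SpecialLinearGroup (Fin 2) (ZMod p)), ((p : ℤ) ^ (if (A : Matrix (Fin 2) (Fin 2) (ZMod p)) = 1 then 2 else
      if Matrix.trace (A : Matrix (Fin 2) (Fin 2) (ZMod p)) = 2 then 1 else 0)) ^ k =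
      1 + (if Matrix.trace (A : Matrix (Fin 2) (Fin 2) (ZMod p)) = 2 then (p : ℤ) ^ k - 1 else 0)
        + (if A = 1 then (p : ℤ) ^ (2 * k) - (p : ℤ) ^ k else 0) := by
    intro A
    by_cases h1 : (A : Matrix (Fin 2) (Fin 2) (ZMod p)) = 1
    · have hA1 : A = 1 := Subtype.ext h1
      have htr : Matrix.trace (A : Matrix (Fin 2) (Fin 2) (ZMod p)) = 2 := by
        rw [h1, Matrix.trace_one]
        norm_num
      rw [if_pos h1, if_pos htr, if_pos hA1, ← pow_mul]
      ring
    · have hA1 : A ≠ 1 := fun h => h1 (by rw [h]; rfl)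
      rw [if_neg h1, if_neg hA1]
      by_cases h2 : Matrix.trace (A : Matrix (Fin 2) (Fin 2) (ZMod p)) = 2
      · rw [if_pos h2, if_pos h2, pow_one]
        ring
      · rw [if_neg h2, if_neg h2, pow_zero, one_pow]
        ring
  rw [Finset.sum_congr rfl (fun A _ => hpoint A)] at hZ
  rw [Finset.sum_add_distrib, Finset.sum_add_distrib, Finset.sum_const, Finset.sum_ite_eq'
    Finset.univ (1 : (Matrix.SpecialLinearGroup (Fin 2) (ZMod p))) (fun _ => (p : ℤ) ^ (2 * k) - (p : ℤ) ^ k)] at hZ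
  rw [if_pos (Finset.mem_univ _)] at hZ
  have htsum : (∑ A : (Matrix.SpecialLinearGroup (Fin 2) (ZMod p)), if Matrix.trace (A : Matrix (Fin 2) (Fin 2) (ZMod p)) = 2
      then (p : ℤ) ^ k - 1 else 0) = ((p : ℤ) ^ k - 1) * (p : ℤ) ^ 2 := by
    rw [Finset.sum_ite, Finset.sum_const, Finset.sum_const]
    simp only [smul_zero, add_zero]
    rw [← Fintype.card_subtype, nsmul_eq_mul, card_trace_two]
    ring
  rw [htsum] at hZ
  rw [Finset.card_univ, nsmul_eq_mul, mul_one, card_SL2] at hZ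
  rw [hquot]
  linear_combination hZ

end auxiliary

theorem orbit_count_difference_recursion (p : ℕ) [Fact p.Prime] :
    slOrbDiff p 0 = 1 ∧
      ∀ n : ℕ, 1 ≤ n →
        slOrbDiff p n = (p : ℤ) * slOrbDiff p (n - 1) +
          (p : ℤ) ^ (2 * n - 2) * ((p : ℤ) - 1) := by
  have hp : 2 ≤ p := (Fact.out : p.Prime).two_le
  have hp' : (2 : ℤ) ≤ (p : ℤ) := by exact_mod_cast hp
  have hD : ((p : ℤ) ^ 3 - p) ≠ 0 := by
    have h1 : (0:ℤ) < (p:ℤ) := by linarith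
    have h2 : (0:ℤ) < (p:ℤ) - 1 := by linarith
    have h3 : (0:ℤ) < (p:ℤ) + 1 := by linarith
    have he : (p:ℤ) ^ 3 - p = (p:ℤ) * (((p:ℤ) - 1) * ((p:ℤ) + 1)) := by ring
    rw [he]
    exact ne_of_gt (mul_pos h1 (mul_pos h2 h3))
  constructor
  · apply mul_right_cancel₀ hD
    show slOrbDiff p 0 * ((p : ℤ) ^ 3 - p) = 1 * ((p : ℤ) ^ 3 - p)
    simp only [slOrbDiff]
    norm_num
    linear_combination (key_count p 1) - (key_count p 0)
  · intro n hn
    obtain ⟨m, rfl⟩ : ∃ m, n = m + 1 := ⟨n - 1, by omega⟩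
    have hexp : 2 * (m + 1) - 2 = 2 * m := by omega
    have hm1 : m + 1 - 1 = m := by omega
    rw [hexp, hm1]
    apply mul_right_cancel₀ hD
    simp only [slOrbDiff]
    have k2 := key_count p (m + 2)
    have k1 := key_count p (m + 1)
    have k0 := key_count p m
    have e2 : (p : ℤ) ^ (2 * (m + 2)) = ((p : ℤ) ^ m) ^ 2 * (p : ℤ) ^ 4 := by
      rw [← pow_mul, ← pow_add]; congr 1; omega
    have e1 : (p : ℤ) ^ (2 * (m + 1)) = ((p : ℤ) ^ m) ^ 2 * (p : ℤ) ^ 2 := by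
      rw [← pow_mul, ← pow_add]; congr 1; omega
    have e0 : (p : ℤ) ^ (2 * m) = ((p : ℤ) ^ m) ^ 2 := by
      rw [← pow_mul]; congr 1; omega
    have f2 : (p : ℤ) ^ (m + 2) = (p : ℤ) ^ m * (p : ℤ) ^ 2 := by rw [← pow_add]
    have f1 : (p : ℤ) ^ (m + 1) = (p : ℤ) ^ m * (p : ℤ) := by rw [pow_succ]
    rw [e2, f2] at k2
    rw [e1, f1] at k1
    rw [e0] at k0
    have hm2 : m + 1 + 1 = m + 2 := by omega
    rw [hm2]
    rw [e0]
    linear_combination k2 - (1 + (p : ℤ)) * k1 + (p : ℤ) * k0
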